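/- Let g and h be integers with g ≥ h ≥ 2. There exists a constant C = C(g,h) > 0 such that for every integer N ≥ 2 and every C_h[g] set A ⊆ [0, N²], writing A_ν = |A ∩ [(ν-1)N, νN]| for ν = 1,…,N, one has Σ_{ν=1}^{N} A_ν · ν^{-(1 - 1/h)} ≤ C · (N log N)^{1 - 1/h}. -/

import Mathlib

open Finset

/-- The minimum of a finset of integers (`0` for the empty set). -/
def minm (S : Finset ℤ) : ℤ := WithTop.untopD 0 S.min

lemma minm_mem {S : Finset ℤ} (hS : S.Nonempty) : minm S ∈ S := by
  have h := Finset.min'_mem S hS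
  have : S.min = (S.min' hS : WithTop ℤ) := (Finset.coe_min' hS).symm
  simpa [minm, this] using h

lemma minm_le {S : Finset ℤ} {x : ℤ} (hx : x ∈ S) : minm S ≤ x := by
  have hS : S.Nonempty := ⟨x, hx⟩
  have : S.min = (S.min' hS : WithTop ℤ) := (Finset.coe_min' hS).symm
  simpa [minm, this] using Finset.min'_le S x hx

/-- The shape of a finset of integers: its translate with minimum `0`. -/
def shapeOf (S : Finset ℤ) : Finset ℤ := S.image (fun x => x - minm S)

lemma shapeOf_card (S : Finset ℤ) : (shapeOf S).card = S.card :=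
  Finset.card_image_of_injective _ (sub_left_injective)

lemma shapeOf_recover (S : Finset ℤ) :
    (shapeOf S).image (fun x => x + minm S) = S := by
  rw [shapeOf, Finset.image_image]
  ext x
  simp

lemma zero_mem_shapeOf {S : Finset ℤ} (hS : S.Nonempty) : 0 ∈ shapeOf S :=
  Finset.mem_image.2 ⟨minm S, minm_mem hS, by simp⟩

lemma pow_le_const_mul_choose (m h : ℕ) (hh : 2 ≤ h) :
    m ^ h ≤ (2*h)^h * (m.choose h + 1) := by
  rcases le_or_gt m (2*h) with hm | hm
  · calc m ^ h ≤ (2*h)^h := Nat.pow_le_pow_left hm h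
    _ ≤ (2*h)^h * (m.choose h + 1) := Nat.le_mul_of_pos_right _ (Nat.succ_pos _)
  · have h1 : m ^ h ≤ (2 * (m + 1 - h)) ^ h := by
      apply Nat.pow_le_pow_left
      omega
    have h2 : (2 * (m + 1 - h)) ^ h = 2^h * (m + 1 - h)^h := Nat.mul_pow _ _ _
    have h3 : (m + 1 - h)^h ≤ m.descFactorial h := Nat.pow_sub_le_descFactorial m h
    have h4 : m.descFactorial h = h.factorial * m.choose h :=
      Nat.descFactorial_eq_factorial_mul_choose m h
    have h5 : h.factorial ≤ h ^ h := Nat.factorial_le_pow h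
    calc m ^ h ≤ 2^h * (m + 1 - h)^h := by rw [← h2]; exact h1
    _ ≤ 2^h * (h.factorial * m.choose h) := by rw [← h4]; exact Nat.mul_le_mul_left _ h3
    _ ≤ 2^h * (h^h * m.choose h) := Nat.mul_le_mul_left _ (Nat.mul_le_mul_right _ h5)
    _ = (2*h)^h * m.choose h := by rw [Nat.mul_pow]; ring
    _ ≤ (2*h)^h * (m.choose h + 1) := Nat.mul_le_mul_left _ (Nat.le_succ _)

/-- `A` is a `C_h[g]` set: there do not exist a set `X` of `h` integers and `g` pairwise
distinct integers `k_1, …, k_g` such that `X + k_i ⊆ A` for every `i`. -/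
def IsChgSet (h g : ℕ) (A : Set ℤ) : Prop :=
  ¬ ∃ (X : Finset ℤ) (k : Fin g → ℤ), X.card = h ∧ Function.Injective k ∧
      ∀ i : Fin g, ∀ x ∈ X, x + k i ∈ A

/-- Key counting: the number of `h`-element subsets of blocks of a `C_h[g]` set. -/
lemma count_blocks (g h N : ℕ) (hgh : h ≤ g) (hh : 2 ≤ h) (hN : 2 ≤ N)
    (A : Finset ℤ) (hA : IsChgSet h g ↑A) :
    ∑ ν ∈ Finset.Icc 1 N,
      ((A ∩ Finset.Icc (((ν:ℤ)-1)*(N:ℤ)) ((ν:ℤ)*(N:ℤ))).card).choose h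
      ≤ (g-1) * N^(h-1) := by
  set B : ℕ → Finset ℤ := fun ν => A ∩ Finset.Icc (((ν:ℤ)-1)*(N:ℤ)) ((ν:ℤ)*(N:ℤ)) with hB
  have hNZ : (0:ℤ) ≤ (N:ℤ) := by positivity
  -- a point in two distinct blocks is the common endpoint
  have hpoint : ∀ ν μ : ℕ, ν < μ → ∀ x : ℤ,
      x ∈ Finset.Icc (((ν:ℤ)-1)*(N:ℤ)) ((ν:ℤ)*(N:ℤ)) →
      x ∈ Finset.Icc (((μ:ℤ)-1)*(N:ℤ)) ((μ:ℤ)*(N:ℤ)) → x = (ν:ℤ)*(N:ℤ) := by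
    intro ν μ hlt x hx1 hx2
    rw [Finset.mem_Icc] at hx1 hx2
    have hcast : (ν:ℤ) + 1 ≤ (μ:ℤ) := by exact_mod_cast hlt
    have : (ν:ℤ)*(N:ℤ) ≤ ((μ:ℤ)-1)*(N:ℤ) := by nlinarith
    omega
  have hdisj : ∀ ν ∈ Finset.Icc 1 N, ∀ μ ∈ Finset.Icc 1 N, ν ≠ μ →
      Disjoint ((B ν).powersetCard h) ((B μ).powersetCard h) := by
    intro ν _ μ _ hne
    rw [Finset.disjoint_left]
    intro S hSν hSμ
    obtain ⟨hsub1, hcard⟩ := Finset.mem_powersetCard.1 hSν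
    obtain ⟨hsub2, -⟩ := Finset.mem_powersetCard.1 hSμ
    obtain ⟨x, hx, y, hy, hxy⟩ := Finset.one_lt_card.1 (by omega : 1 < S.card)
    have hx1 := (Finset.mem_inter.1 (hsub1 hx)).2
    have hx2 := (Finset.mem_inter.1 (hsub2 hx)).2
    have hy1 := (Finset.mem_inter.1 (hsub1 hy)).2
    have hy2 := (Finset.mem_inter.1 (hsub2 hy)).2
    rcases hne.lt_or_gt with hlt | hlt
    · exact hxy ((hpoint ν μ hlt x hx1 hx2).trans (hpoint ν μ hlt y hy1 hy2).symm)
    · exact hxy ((hpoint μ ν hlt x hx2 hx1).trans (hpoint μ ν hlt y hy2 hy1).symm)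
  set E := (Finset.Icc 1 N).biUnion (fun ν => (B ν).powersetCard h) with hEdef
  have hsum_eq : ∑ ν ∈ Finset.Icc 1 N, ((B ν).card).choose h = E.card := by
    rw [hEdef, Finset.card_biUnion hdisj]
    exact Finset.sum_congr rfl fun ν _ => (Finset.card_powersetCard h (B ν)).symm
  -- facts about members of E
  have hE_elim : ∀ S ∈ E, S.card = h ∧ S ⊆ A ∧ shapeOf S ⊆ Finset.Icc (0:ℤ) (N:ℤ) := by
    intro S hS
    obtain ⟨ν, hν, hSp⟩ := Finset.mem_biUnion.1 hS
    obtain ⟨hsub, hcard⟩ := Finset.mem_powersetCard.1 hSp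
    have hSA : S ⊆ A := hsub.trans Finset.inter_subset_left
    have hnon : S.Nonempty := by rw [← Finset.card_pos, hcard]; omega
    refine ⟨hcard, hSA, ?_⟩
    intro x hx
    obtain ⟨s, hs, rfl⟩ := Finset.mem_image.1 hx
    have hm := minm_mem hnon
    have hs' := (Finset.mem_inter.1 (hsub hs)).2
    have hm' := (Finset.mem_inter.1 (hsub hm)).2
    rw [Finset.mem_Icc] at hs' hm' ⊢
    have := minm_le hs
    constructor
    · omega
    · have : (ν:ℤ)*(N:ℤ) - ((ν:ℤ)-1)*(N:ℤ) = (N:ℤ) := by ring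
      omega
  -- fibers of the shape map have at most g-1 elements
  have hfiber : ∀ a ∈ E.image shapeOf,
      (E.filter (fun S => shapeOf S = a)).card ≤ g - 1 := by
    intro a ha
    by_contra hgt
    push_neg at hgt
    have hg1 : g ≤ (E.filter (fun S => shapeOf S = a)).card := by omega
    obtain ⟨F, hFsub, hFcard⟩ := Finset.exists_subset_card_eq hg1
    have hrec : ∀ S ∈ F, S = a.image (fun x => x + minm S) := by
      intro S hS
      have hsh : shapeOf S = a := (Finset.mem_filter.1 (hFsub hS)).2
      rw [← hsh, shapeOf_recover]
    have hminj : Set.InjOn minm F := by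
      intro S hS T hT hm
      rw [hrec S hS, hrec T hT, hm]
    set K := F.image minm with hKdef
    have hKcard : K.card = g := by
      rw [hKdef, Finset.card_image_of_injOn hminj, hFcard]
    set k : Fin g → ℤ := fun i => (K.orderIsoOfFin hKcard i : ℤ) with hkdef
    apply hA
    obtain ⟨S₀, hS₀E, hS₀⟩ := Finset.mem_image.1 ha
    refine ⟨a, k, ?_, ?_, ?_⟩
    · rw [← hS₀, shapeOf_card]; exact (hE_elim S₀ hS₀E).1
    · intro i j hij
      exact (K.orderIsoOfFin hKcard).injective (Subtype.coe_injective hij)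
    · intro i x hx
      have hki : k i ∈ K := (K.orderIsoOfFin hKcard i).2
      obtain ⟨S, hSF, hSmin⟩ := Finset.mem_image.1 hki
      have hSfil := hFsub hSF
      have hSE : S ∈ E := (Finset.mem_filter.1 hSfil).1
      have h2 := Finset.mem_image_of_mem (fun y => y + minm S) hx
      rw [← hrec S hSF] at h2
      have h3 : x + k i ∈ S := by rw [← hSmin]; exact h2
      exact Finset.mem_coe.2 ((hE_elim S hSE).2.1 h3)
  -- the number of shapes is at most N^(h-1)
  have himg : (E.image shapeOf).card ≤ N^(h-1) := by
    have hmap : ∀ a ∈ E.image shapeOf,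
        a.erase 0 ∈ Finset.powersetCard (h-1) (Finset.Icc (1:ℤ) (N:ℤ)) := by
      intro a ha
      obtain ⟨S, hSE, rfl⟩ := Finset.mem_image.1 ha
      obtain ⟨hcard, hsubA, hshape⟩ := hE_elim S hSE
      have hnon : S.Nonempty := by rw [← Finset.card_pos, hcard]; omega
      refine Finset.mem_powersetCard.2 ⟨?_, ?_⟩
      · intro x hx
        have hx0 : x ≠ 0 := (Finset.mem_erase.1 hx).1
        have hxa := hshape (Finset.mem_erase.1 hx).2
        rw [Finset.mem_Icc] at hxa ⊢
        omega
      · rw [Finset.card_erase_of_mem (zero_mem_shapeOf hnon), shapeOf_card, hcard]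
    have hinj : Set.InjOn (fun a : Finset ℤ => a.erase 0) (E.image shapeOf) := by
      intro a ha b hb hab
      obtain ⟨S, hSE, rfl⟩ := Finset.mem_image.1 ha
      obtain ⟨T, hTE, rfl⟩ := Finset.mem_image.1 hb
      have hnS : S.Nonempty := by
        rw [← Finset.card_pos, (hE_elim S hSE).1]; omega
      have hnT : T.Nonempty := by
        rw [← Finset.card_pos, (hE_elim T hTE).1]; omega
      calc shapeOf S = insert 0 ((shapeOf S).erase 0) :=
            (Finset.insert_erase (zero_mem_shapeOf hnS)).symm
      _ = insert 0 ((shapeOf T).erase 0) := by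
            rw [show (shapeOf S).erase 0 = (shapeOf T).erase 0 from hab]
      _ = shapeOf T := Finset.insert_erase (zero_mem_shapeOf hnT)
    have hcard1 : (E.image shapeOf).card
        ≤ (Finset.powersetCard (h-1) (Finset.Icc (1:ℤ) (N:ℤ))).card :=
      Finset.card_le_card_of_injOn _ hmap hinj
    have hcard2 : (Finset.powersetCard (h-1) (Finset.Icc (1:ℤ) (N:ℤ))).card
        = N.choose (h-1) := by
      rw [Finset.card_powersetCard, Int.card_Icc]
      norm_num
    have hcard3 : N.choose (h-1) ≤ N^(h-1) := by
      calc N.choose (h-1) ≤ N.descFactorial (h-1) := by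
            rw [Nat.descFactorial_eq_factorial_mul_choose]
            exact Nat.le_mul_of_pos_left _ (Nat.factorial_pos _)
      _ ≤ N^(h-1) := Nat.descFactorial_le_pow N (h-1)
    omega
  have hEcard : E.card ≤ (g-1) * N^(h-1) := by
    calc E.card ≤ (g-1) * (E.image shapeOf).card :=
          Finset.card_le_mul_card_image E (g-1) hfiber
    _ ≤ (g-1) * N^(h-1) := Nat.mul_le_mul_left _ himg
  have final : ∑ ν ∈ Finset.Icc 1 N, ((B ν).card).choose h ≤ (g-1) * N^(h-1) := by
    rw [hsum_eq]; exact hEcard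
  exact final

/-- Sum of h-th powers of block counts of a `C_h[g]` set. -/
lemma sum_pow_blocks (g h N : ℕ) (hgh : h ≤ g) (hh : 2 ≤ h) (hN : 2 ≤ N)
    (A : Finset ℤ) (hA : IsChgSet h g ↑A) :
    ∑ ν ∈ Finset.Icc 1 N,
      ((A ∩ Finset.Icc (((ν:ℤ)-1)*(N:ℤ)) ((ν:ℤ)*(N:ℤ))).card) ^ h
      ≤ (2*h)^h * ((g+1) * N^(h-1)) := by
  have hc := count_blocks g h N hgh hh hN A hA
  have hX : N ≤ N^(h-1) := Nat.le_self_pow (by omega) N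
  calc ∑ ν ∈ Finset.Icc 1 N,
      ((A ∩ Finset.Icc (((ν:ℤ)-1)*(N:ℤ)) ((ν:ℤ)*(N:ℤ))).card) ^ h
      ≤ ∑ ν ∈ Finset.Icc 1 N, (2*h)^h *
          (((A ∩ Finset.Icc (((ν:ℤ)-1)*(N:ℤ)) ((ν:ℤ)*(N:ℤ))).card).choose h + 1) :=
        Finset.sum_le_sum fun ν _ => pow_le_const_mul_choose _ h hh
  _ = (2*h)^h * ((∑ ν ∈ Finset.Icc 1 N,
        ((A ∩ Finset.Icc (((ν:ℤ)-1)*(N:ℤ)) ((ν:ℤ)*(N:ℤ))).card).choose h) + N) := by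
      rw [← Finset.mul_sum, Finset.sum_add_distrib, Finset.sum_const, Nat.card_Icc]
      simp
  _ ≤ (2*h)^h * ((g-1) * N^(h-1) + N^(h-1)) :=
      Nat.mul_le_mul_left _ (Nat.add_le_add hc hX)
  _ ≤ (2*h)^h * ((g+1) * N^(h-1)) := by
      apply Nat.mul_le_mul_left
      calc (g-1) * N^(h-1) + N^(h-1) = (g-1+1) * N^(h-1) := by ring
      _ ≤ (g+1) * N^(h-1) := Nat.mul_le_mul_right _ (by omega)

theorem stmt14 (g h : ℕ) (hgh : h ≤ g) (hh : 2 ≤ h) :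
    ∃ C : ℝ, 0 < C ∧ ∀ N : ℕ, 2 ≤ N → ∀ A : Finset ℤ,
      ↑A ⊆ Set.Icc (0 : ℤ) ((N : ℤ) ^ 2) → IsChgSet h g ↑A →
      ∑ ν ∈ Finset.Icc 1 N,
          ((A ∩ Finset.Icc (((ν : ℤ) - 1) * N) ((ν : ℤ) * N)).card : ℝ) *
            (ν : ℝ) ^ (-(1 - (1 : ℝ) / h)) ≤
        C * ((N : ℝ) * Real.log N) ^ (1 - (1 : ℝ) / h) := by
  have hh0 : (0:ℝ) < h := by exact_mod_cast (by omega : 0 < h)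
  have hh1 : (1:ℝ) < h := by exact_mod_cast (by omega : 1 < h)
  have hne : (h:ℝ) ≠ 0 := ne_of_gt hh0
  have hne1 : (h:ℝ) - 1 ≠ 0 := by intro hcon; apply hne.elim; linarith
  set K : ℝ := (2*(h:ℝ))^h * ((g:ℝ)+1) with hKdef
  have hK1 : (1:ℝ) ≤ K := by
    have h1 : (1:ℝ) ≤ (2*(h:ℝ))^h := one_le_pow₀ (by linarith)
    have h2 : (1:ℝ) ≤ (g:ℝ)+1 := by
      have : (0:ℝ) ≤ (g:ℝ) := Nat.cast_nonneg g
      linarith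
    nlinarith
  refine ⟨3*K, by linarith, ?_⟩
  intro N hN A hsub hChg
  set α : ℝ := 1 - 1/(h:ℝ) with hα
  set q : ℝ := (h:ℝ)/((h:ℝ)-1) with hq
  have h1h : 1/(h:ℝ) ≤ 1 := by rw [div_le_one hh0]; linarith
  have h1h0 : 0 ≤ 1/(h:ℝ) := by positivity
  have hα0 : 0 ≤ α := by rw [hα]; linarith
  have hα1 : α ≤ 1 := by rw [hα]; linarith
  have hq0 : 0 < q := div_pos hh0 (by linarith)
  have hpq : Real.HolderConjugate (h:ℝ) q := by
    rw [Real.holderConjugate_iff]; constructor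
    · exact hh1
    · rw [hq]; field_simp; ring
  have hN0 : (0:ℝ) ≤ N := by positivity
  have hN1 : (1:ℝ) ≤ N := by exact_mod_cast (by omega : 1 ≤ N)
  have hlogN : 0 ≤ Real.log N := Real.log_nonneg hN1
  set f : ℕ → ℝ := fun ν =>
    ((A ∩ Finset.Icc (((ν:ℤ)-1)*(N:ℤ)) ((ν:ℤ)*(N:ℤ))).card : ℝ) with hfdef
  have hf : ∀ ν, 0 ≤ f ν := fun ν => by positivity
  set w : ℕ → ℝ := fun ν => (ν:ℝ)^(-α) with hwdef
  have HAB := Real.inner_le_Lp_mul_Lq (Finset.Icc 1 N) f w hpq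
  -- factor 1
  have h1 : ∑ ν ∈ Finset.Icc 1 N, |f ν| ^ (h:ℝ)
      = ∑ ν ∈ Finset.Icc 1 N, (f ν)^(h:ℕ) := by
    refine Finset.sum_congr rfl fun ν _ => ?_
    rw [abs_of_nonneg (hf ν), Real.rpow_natCast]
  have hsumnat : (∑ ν ∈ Finset.Icc 1 N, (f ν)^(h:ℕ)) ≤ K * (N:ℝ)^((h:ℕ)-1) := by
    have := sum_pow_blocks g h N hgh hh hN A hChg
    have hcast : (((2*h)^h * ((g+1) * N^(h-1)) : ℕ) : ℝ) = K * (N:ℝ)^((h:ℕ)-1) := by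
      push_cast [hKdef]
      ring
    calc (∑ ν ∈ Finset.Icc 1 N, (f ν)^(h:ℕ))
        = ((∑ ν ∈ Finset.Icc 1 N,
            ((A ∩ Finset.Icc (((ν:ℤ)-1)*(N:ℤ)) ((ν:ℤ)*(N:ℤ))).card) ^ h : ℕ) : ℝ) := by
          push_cast [hfdef]
          rfl
    _ ≤ (((2*h)^h * ((g+1) * N^(h-1)) : ℕ) : ℝ) := by exact_mod_cast this
    _ = K * (N:ℝ)^((h:ℕ)-1) := hcast
  have hsum0 : 0 ≤ ∑ ν ∈ Finset.Icc 1 N, |f ν| ^ (h:ℝ) := by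
    apply Finset.sum_nonneg; intro ν _; positivity
  have hF1 : (∑ ν ∈ Finset.Icc 1 N, |f ν|^(h:ℝ))^(1/(h:ℝ)) ≤ K * (N:ℝ)^α := by
    have step1 : (∑ ν ∈ Finset.Icc 1 N, |f ν|^(h:ℝ))^(1/(h:ℝ))
        ≤ (K * (N:ℝ)^((h:ℕ)-1))^(1/(h:ℝ)) := by
      apply Real.rpow_le_rpow hsum0 _ (by positivity)
      rw [h1]; exact hsumnat
    refine step1.trans ?_
    rw [Real.mul_rpow (by linarith) (by positivity)]
    have e1 : ((N:ℝ)^((h:ℕ)-1))^(1/(h:ℝ)) = (N:ℝ)^α := by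
      rw [← Real.rpow_natCast (N:ℝ) (h-1), ← Real.rpow_mul hN0]
      congr 1
      rw [Nat.cast_sub (by omega : 1 ≤ h), hα]
      field_simp
      norm_num
    have e2 : K^(1/(h:ℝ)) ≤ K := by
      calc K^(1/(h:ℝ)) ≤ K^(1:ℝ) :=
            Real.rpow_le_rpow_of_exponent_le hK1 h1h
      _ = K := Real.rpow_one K
    rw [e1]
    exact mul_le_mul_of_nonneg_right e2 (Real.rpow_nonneg hN0 _)
  -- factor 2
  have hwq : ∀ ν ∈ Finset.Icc 1 N, |w ν|^q = (ν:ℝ)⁻¹ := by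
    intro ν hν
    have hν1 : 1 ≤ ν := (Finset.mem_Icc.1 hν).1
    have hν0 : (0:ℝ) ≤ ν := by positivity
    rw [hwdef]
    rw [abs_of_nonneg (Real.rpow_nonneg hν0 _), ← Real.rpow_mul hν0]
    have he : -α * q = -1 := by
      rw [hα, hq]; field_simp
    rw [he, Real.rpow_neg_one]
  have hharm : ∑ ν ∈ Finset.Icc 1 N, |w ν|^q ≤ 3 * Real.log N := by
    rw [Finset.sum_congr rfl hwq]
    have heq : ∑ ν ∈ Finset.Icc 1 N, ((ν:ℝ))⁻¹ = ((harmonic N : ℚ) : ℝ) := by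
      rw [harmonic_eq_sum_Icc]
      push_cast
      rfl
    rw [heq]
    have hle := harmonic_le_one_add_log N
    have hlog2 : Real.log 2 ≤ Real.log N :=
      Real.log_le_log (by norm_num) (by exact_mod_cast hN)
    have hd9 := Real.log_two_gt_d9
    linarith
  have hwq0 : 0 ≤ ∑ ν ∈ Finset.Icc 1 N, |w ν|^q := by
    apply Finset.sum_nonneg; intro ν _; positivity
  have h1q : 1/q = α := by
    rw [hq, hα, one_div_div]
    field_simp
  have hF2 : (∑ ν ∈ Finset.Icc 1 N, |w ν|^q)^(1/q) ≤ 3 * (Real.log N)^α := by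
    calc (∑ ν ∈ Finset.Icc 1 N, |w ν|^q)^(1/q)
        ≤ (3 * Real.log N)^(1/q) := Real.rpow_le_rpow hwq0 hharm (by positivity)
    _ = 3^(1/q) * (Real.log N)^(1/q) := Real.mul_rpow (by norm_num) hlogN
    _ ≤ 3 * (Real.log N)^α := by
        rw [h1q]
        have : (3:ℝ)^α ≤ 3 := by
          calc (3:ℝ)^α ≤ (3:ℝ)^(1:ℝ) :=
                Real.rpow_le_rpow_of_exponent_le (by norm_num) hα1
          _ = 3 := Real.rpow_one 3
        exact mul_le_mul_of_nonneg_right this (Real.rpow_nonneg hlogN _)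
  -- combine
  have hX1 : 0 ≤ (∑ ν ∈ Finset.Icc 1 N, |f ν|^(h:ℝ))^(1/(h:ℝ)) :=
    Real.rpow_nonneg hsum0 _
  have hcomb : ∑ ν ∈ Finset.Icc 1 N, f ν * w ν ≤ (K * (N:ℝ)^α) * (3 * (Real.log N)^α) := by
    refine HAB.trans ?_
    have hKN : 0 ≤ K * (N:ℝ)^α := by
      have := Real.rpow_nonneg hN0 α
      nlinarith
    exact mul_le_mul hF1 hF2 (Real.rpow_nonneg hwq0 _) hKN
  have hfinal : (K * (N:ℝ)^α) * (3 * (Real.log N)^α)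
      = 3*K * ((N:ℝ) * Real.log N)^α := by
    rw [Real.mul_rpow hN0 hlogN]
    ring
  calc ∑ ν ∈ Finset.Icc 1 N,
        ((A ∩ Finset.Icc (((ν : ℤ) - 1) * N) ((ν : ℤ) * N)).card : ℝ) *
          (ν : ℝ) ^ (-(1 - (1 : ℝ) / h))
      = ∑ ν ∈ Finset.Icc 1 N, f ν * w ν := rfl
  _ ≤ (K * (N:ℝ)^α) * (3 * (Real.log N)^α) := hcomb
  _ = 3*K * ((N:ℝ) * Real.log N)^α := hfinal
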